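/- If x ∈ ℝ² is a critical point of F, i.e. ∂₁F(x) = 0 and ∂₂F(x) = 0, then F(x) ∈ {1, −1/3, −1/2}. -/
import Mathlib


open scoped ENNReal
open Filter

noncomputable section

/-- The Hilbert space `ℓ²(ℤ², ℂ)`. -/
abbrev H2 : Type := lp (fun _ : ℤ × ℤ => ℂ) 2

/-- The triangular-lattice Laplacian, acting pointwise on functions `ℤ² → ℂ`. -/
def lapT (f : ℤ × ℤ → ℂ) : ℤ × ℤ → ℂ := fun n =>
  (1/6 : ℂ) * (f (n.1 + 1, n.2) + f (n.1 - 1, n.2) + f (n.1, n.2 + 1)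
    + f (n.1, n.2 - 1) + f (n.1 + 1, n.2 - 1) + f (n.1 - 1, n.2 + 1))

/-- The symbol `F(x₁,x₂) = (1/3)(cos x₁ + cos x₂ + cos (x₁ - x₂))`. -/
def symbF (x : ℝ × ℝ) : ℝ := (1/3) * (Real.cos x.1 + Real.cos x.2 + Real.cos (x.1 - x.2))

/-- `∂₁ F`. -/
def d1F (x : ℝ × ℝ) : ℝ := -(1/3) * (Real.sin x.1 + Real.sin (x.1 - x.2))

/-- `∂₂ F`. -/
def d2F (x : ℝ × ℝ) : ℝ := -(1/3) * (Real.sin x.2 - Real.sin (x.1 - x.2))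

/-- Japanese bracket `⟨t⟩ = √(1/2 + t²)`. -/
def jap (t : ℝ) : ℝ := Real.sqrt (1/2 + t^2)

/-- The weight `Λ(n₁,n₂) = ⟨n₁⟩ + ⟨n₂⟩`. -/
def Lam (n : ℤ × ℤ) : ℝ := jap (n.1 : ℝ) + jap (n.2 : ℝ)

/-- The conjugate operator `A`, acting pointwise on functions `ℤ² → ℂ`. -/
def opA (f : ℤ × ℤ → ℂ) : ℤ × ℤ → ℂ := fun n =>
  (Complex.I / 6) *
    (((n.1 : ℂ) + 1/2) * f (n.1 + 1, n.2) - ((n.1 : ℂ) - 1/2) * f (n.1 - 1, n.2)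
      + ((n.2 : ℂ) + 1/2) * f (n.1, n.2 + 1) - ((n.2 : ℂ) - 1/2) * f (n.1, n.2 - 1)
      + ((n.2 : ℂ) - (n.1 : ℂ) + 1) * f (n.1 - 1, n.2 + 1)
      + ((n.1 : ℂ) - (n.2 : ℂ) + 1) * f (n.1 + 1, n.2 - 1))

/-- The perturbed Laplacian `Δ̃` with weight `m`, acting pointwise on functions `ℤ² → ℂ`:
`(Δ̃ f)(n) = (1/6) Σ_{l ∼ n} f(l) / (√(m n) √(m l))`. -/
def lapPert (m : ℤ × ℤ → ℝ) (f : ℤ × ℤ → ℂ) : ℤ × ℤ → ℂ := fun n =>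
  (1/6 : ℂ) *
    (f (n.1 + 1, n.2) / ((Real.sqrt (m n) * Real.sqrt (m (n.1 + 1, n.2)) : ℝ) : ℂ)
      + f (n.1 - 1, n.2) / ((Real.sqrt (m n) * Real.sqrt (m (n.1 - 1, n.2)) : ℝ) : ℂ)
      + f (n.1, n.2 + 1) / ((Real.sqrt (m n) * Real.sqrt (m (n.1, n.2 + 1)) : ℝ) : ℂ)
      + f (n.1, n.2 - 1) / ((Real.sqrt (m n) * Real.sqrt (m (n.1, n.2 - 1)) : ℝ) : ℂ)
      + f (n.1 + 1, n.2 - 1) / ((Real.sqrt (m n) * Real.sqrt (m (n.1 + 1, n.2 - 1)) : ℝ) : ℂ)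
      + f (n.1 - 1, n.2 + 1) / ((Real.sqrt (m n) * Real.sqrt (m (n.1 - 1, n.2 + 1)) : ℝ) : ℂ))

/-- At any critical point of `F`, the value of `F` lies in `{1, -1/3, -1/2}`. -/
theorem symbF_value_at_critical_points (x : ℝ × ℝ) (h1 : d1F x = 0) (h2 : d2F x = 0) :
    symbF x ∈ ({1, -(1/3), -(1/2)} : Set ℝ) := by

  simp only [d1F, d2F] at h1 h2
  unfold symbF
  rw [Real.sin_sub] at h1 h2
  rw [Real.cos_sub]
  set c1 := Real.cos x.1 with hc1
  set c2 := Real.cos x.2 with hc2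
  set s1 := Real.sin x.1 with hs1
  set s2 := Real.sin x.2 with hs2
  have p1 : s1 ^ 2 + c1 ^ 2 = 1 := Real.sin_sq_add_cos_sq x.1
  have p2 : s2 ^ 2 + c2 ^ 2 = 1 := Real.sin_sq_add_cos_sq x.2
  have e1 : s1 = -s2 := by linear_combination (-3)*h1 + (-3)*h2
  have e2 : s2 * (1 + c1 + c2) = 0 := by linear_combination (-3)*h2 + c2*e1
  simp only [Set.mem_insert_iff, Set.mem_singleton_iff]
  rcases mul_eq_zero.mp e2 with hz | hz
  · have hs1z : s1 = 0 := by rw [e1, hz, neg_zero]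
    have hc1e : (c1 - 1) * (c1 + 1) = 0 := by nlinarith
    have hc2e : (c2 - 1) * (c2 + 1) = 0 := by nlinarith
    rcases mul_eq_zero.mp hc1e with h | h <;> rcases mul_eq_zero.mp hc2e with h' | h'
    · left; nlinarith
    · right; left; nlinarith
    · right; left; nlinarith
    · right; left; nlinarith
  · have hcc : (c1 - c2) * (c1 + c2) = 0 := by linear_combination p1 - p2 - (s1 - s2)*e1
    have hce : c1 = c2 := by
      rcases mul_eq_zero.mp hcc with h | h
      · linarith
      · exfalso; linarith
    have hc : c1 = -(1/2) := by linarith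
    have hc' : c2 = -(1/2) := by linarith
    right; right
    linear_combination (1/3)*s2*e1 - (1/3)*p2 + (1/3 + (1/3)*c2)*hc + (1/3)*c2*hc'
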